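/- Let X₁, X₂ be independent square-integrable random vectors in R^n with the setup Y₁ = √γ X₁ + Z₁, Y₂ = √γ X₂ + Z₂ (Z₁, Z₂ standard Gaussian, all four mutually independent), α ∈ (0,1), and X = √(1−α) X₁ + √α X₂. Then E[X | √(1−α) Y₁ + √α Y₂] = E[X | Y₁, Y₂] almost surely if and only if E[ √(1−α) E[X₁|Y₁] + √α E[X₂|Y₂] | √(1−α) Y₁ + √α Y₂ ] = √(1−α) E[X₁|Y₁] + √α E[X₂|Y₂] almost surely. -/

import Mathlib

open MeasureTheory ProbabilityTheory

/-- The density of the standard Gaussian `N(0, I)` on `ℝⁿ`. -/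
noncomputable def stdGaussianPdf {n : ℕ} (z : EuclideanSpace ℝ (Fin n)) : ℝ :=
  (Real.sqrt ((2 * Real.pi) ^ n))⁻¹ * Real.exp (-(1 / 2) * ‖z‖ ^ 2)

section Aux

variable {Ω : Type*} {m0 : MeasurableSpace Ω} {μ : Measure Ω} [IsProbabilityMeasure μ]
  {E : Type*} [NormedAddCommGroup E] [NormedSpace ℝ E] [CompleteSpace E]

lemma indep_mono' {m₁ m₂ m₁' m₂' : MeasurableSpace Ω}
    (h : Indep m₁ m₂ μ) (h1 : m₁' ≤ m₁) (h2 : m₂' ≤ m₂) : Indep m₁' m₂' μ := by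
  rw [Indep_iff] at h ⊢
  exact fun t1 t2 ht1 ht2 => h t1 t2 (h1 _ ht1) (h2 _ ht2)

lemma sup_eq_generateFrom_inter' (m₁ m₂ : MeasurableSpace Ω) :
    m₁ ⊔ m₂ = MeasurableSpace.generateFrom
      {s | ∃ A B, MeasurableSet[m₁] A ∧ MeasurableSet[m₂] B ∧ s = A ∩ B} := by
  apply le_antisymm
  · refine sup_le (fun s hs => ?_) (fun s hs => ?_)
    · exact MeasurableSpace.measurableSet_generateFrom
        ⟨s, Set.univ, hs, MeasurableSet.univ, (Set.inter_univ s).symm⟩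
    · exact MeasurableSpace.measurableSet_generateFrom
        ⟨Set.univ, s, MeasurableSet.univ, hs, (Set.univ_inter s).symm⟩
  · refine MeasurableSpace.generateFrom_le ?_
    rintro s ⟨A, B, hA, hB, rfl⟩
    exact ((le_sup_left : m₁ ≤ m₁ ⊔ m₂) _ hA).inter ((le_sup_right : m₂ ≤ m₁ ⊔ m₂) _ hB)

/-- If `f` is measurable w.r.t. a σ-algebra `mb ⊇ m₁` which is independent of `m₂`,
then `E[f | m₁ ⊔ m₂] = E[f | m₁]`. -/
theorem condexp_sup_indep' {Ω' : Type*} {m₁ m₂ mb : MeasurableSpace Ω'}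
    {m0 : MeasurableSpace Ω'} {μ : Measure Ω'} [IsProbabilityMeasure μ]
    (hm₁b : m₁ ≤ mb)
    (hb : mb ≤ m0) (hm₂ : m₂ ≤ m0) (hindep : Indep mb m₂ μ)
    {f : Ω' → E} (hf : Integrable f μ) (hfm : StronglyMeasurable[mb] f) :
    μ[f | m₁ ⊔ m₂] =ᵐ[μ] μ[f | m₁] := by
  have hm₁ : m₁ ≤ m0 := hm₁b.trans hb
  have hsup : m₁ ⊔ m₂ ≤ m0 := sup_le hm₁ hm₂
  -- key product formula for `mb`-measurable integrable functions
  have key : ∀ (g : Ω' → E), Integrable g μ → StronglyMeasurable[mb] g →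
      ∀ A B, MeasurableSet[m₁] A → MeasurableSet[m₂] B →
      ∫ x in A ∩ B, g x ∂μ = (μ B).toReal • ∫ x in A, g x ∂μ := by
    intro g hg hgm A B hA hB
    have hA' : MeasurableSet[mb] A := hm₁b _ hA
    have hA0 : MeasurableSet[m0] A := hb _ hA'
    have hind : Integrable (A.indicator g) μ := hg.indicator hA0
    have hcond : μ[A.indicator g | m₂] =ᵐ[μ] fun _ => ∫ x, A.indicator g x ∂μ :=
      condExp_indep_eq hb hm₂ (hgm.indicator hA') hindep
    calc ∫ x in A ∩ B, g x ∂μ = ∫ x in B, A.indicator g x ∂μ := by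
          rw [setIntegral_indicator hA0, Set.inter_comm]
      _ = ∫ x in B, (μ[A.indicator g | m₂]) x ∂μ :=
          (setIntegral_condExp hm₂ hind hB).symm
      _ = ∫ _ in B, (∫ x, A.indicator g x ∂μ) ∂μ :=
          integral_congr_ae (ae_restrict_of_ae hcond)
      _ = (μ B).toReal • ∫ x, A.indicator g x ∂μ := setIntegral_const _
      _ = (μ B).toReal • ∫ x in A, g x ∂μ := by rw [integral_indicator hA0]
  have hgint : Integrable (μ[f|m₁]) μ := integrable_condExp
  have hgm : StronglyMeasurable[mb] (μ[f|m₁]) := stronglyMeasurable_condExp.mono hm₁b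
  have main : ∀ s, MeasurableSet[m₁ ⊔ m₂] s →
      ∫ x in s, (μ[f|m₁]) x ∂μ = ∫ x in s, f x ∂μ := by
    have hpi : IsPiSystem
        {s : Set Ω' | ∃ A B, MeasurableSet[m₁] A ∧ MeasurableSet[m₂] B ∧ s = A ∩ B} := by
      rintro s ⟨A, B, hA, hB, rfl⟩ t ⟨A', B', hA', hB', rfl⟩ -
      exact ⟨A ∩ A', B ∩ B', hA.inter hA', hB.inter hB', Set.inter_inter_inter_comm A B A' B'⟩
    refine MeasurableSpace.induction_on_inter (m := m₁ ⊔ m₂)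
      (C := fun s _ => ∫ x in s, (μ[f|m₁]) x ∂μ = ∫ x in s, f x ∂μ)
      (sup_eq_generateFrom_inter' m₁ m₂) hpi ?_ ?_ ?_ ?_
    · simp
    · rintro s ⟨A, B, hA, hB, rfl⟩
      rw [key f hf hfm A B hA hB, key _ hgint hgm A B hA hB,
        setIntegral_condExp hm₁ hf hA]
    · intro t ht hC
      have ht0 : MeasurableSet[m0] t := hsup _ ht
      have h1 : ∫ x in t, f x ∂μ + ∫ x in tᶜ, f x ∂μ = ∫ x, f x ∂μ :=
        integral_add_compl ht0 hf
      have h2 : ∫ x in t, (μ[f|m₁]) x ∂μ + ∫ x in tᶜ, (μ[f|m₁]) x ∂μ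
          = ∫ x, (μ[f|m₁]) x ∂μ := integral_add_compl ht0 hgint
      have htot : ∫ x, (μ[f|m₁]) x ∂μ = ∫ x, f x ∂μ := integral_condExp hm₁
      calc ∫ x in tᶜ, (μ[f|m₁]) x ∂μ
          = ∫ x, (μ[f|m₁]) x ∂μ - ∫ x in t, (μ[f|m₁]) x ∂μ := by
            rw [← h2]; abel
        _ = ∫ x, f x ∂μ - ∫ x in t, f x ∂μ := by rw [htot, hC]
        _ = ∫ x in tᶜ, f x ∂μ := by rw [← h1]; abel
    · intro g hdisj hmeas hC
      rw [integral_iUnion (fun i => hsup _ (hmeas i)) hdisj hf.integrableOn,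
        integral_iUnion (fun i => hsup _ (hmeas i)) hdisj hgint.integrableOn]
      exact tsum_congr hC
  exact (ae_eq_condExp_of_forall_setIntegral_eq hsup hf
    (fun s _ _ => hgint.integrableOn) (fun s hs _ => main s hs)
    ((stronglyMeasurable_condExp.mono (le_sup_left : m₁ ≤ m₁ ⊔ m₂)).aestronglyMeasurable)).symm

lemma comap_prod_eq' {β γ : Type*} [mβ : MeasurableSpace β] [mγ : MeasurableSpace γ]
    (f : Ω → β) (g : Ω → γ) :
    MeasurableSpace.comap (fun ω => (f ω, g ω)) inferInstance
      = MeasurableSpace.comap f mβ ⊔ MeasurableSpace.comap g mγ := by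
  rw [show (inferInstance : MeasurableSpace (β × γ))
      = mβ.comap Prod.fst ⊔ mγ.comap Prod.snd from rfl,
    MeasurableSpace.comap_sup, MeasurableSpace.comap_comp, MeasurableSpace.comap_comp]
  rfl

end Aux

/-- **Equivalence of conditions (7b) and (7c) in Theorem 2.** -/
theorem stmt_16 {Ω : Type*} [MeasureSpace Ω] [IsProbabilityMeasure (ℙ : Measure Ω)]
    {n : ℕ} (X₁ X₂ Z₁ Z₂ Y₁ Y₂ X : Ω → EuclideanSpace ℝ (Fin n))
    (hX₁meas : Measurable X₁) (hX₂meas : Measurable X₂)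
    (hZ₁meas : Measurable Z₁) (hZ₂meas : Measurable Z₂)
    (hX₁L2 : MemLp X₁ 2 (ℙ : Measure Ω)) (hX₂L2 : MemLp X₂ 2 (ℙ : Measure Ω))
    (hZ₁ : Measure.map Z₁ (ℙ : Measure Ω)
      = volume.withDensity (fun z => ENNReal.ofReal (stdGaussianPdf z)))
    (hZ₂ : Measure.map Z₂ (ℙ : Measure Ω)
      = volume.withDensity (fun z => ENNReal.ofReal (stdGaussianPdf z)))
    (hindep : iIndepFun ![X₁, X₂, Z₁, Z₂] (ℙ : Measure Ω))
    (γ : ℝ) (hγ : 0 < γ) (α : ℝ) (hα : α ∈ Set.Ioo (0 : ℝ) 1)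
    (hY₁ : Y₁ = fun ω => Real.sqrt γ • X₁ ω + Z₁ ω)
    (hY₂ : Y₂ = fun ω => Real.sqrt γ • X₂ ω + Z₂ ω)
    (hX : X = fun ω => Real.sqrt (1 - α) • X₁ ω + Real.sqrt α • X₂ ω) :
    ((ℙ : Measure Ω)[X | MeasurableSpace.comap
          (fun ω => Real.sqrt (1 - α) • Y₁ ω + Real.sqrt α • Y₂ ω) inferInstance]
        =ᵐ[(ℙ : Measure Ω)]
      (ℙ : Measure Ω)[X | MeasurableSpace.comap (fun ω => (Y₁ ω, Y₂ ω)) inferInstance])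
    ↔
    ((ℙ : Measure Ω)[(fun ω =>
          Real.sqrt (1 - α) • ((ℙ : Measure Ω)[X₁ |
              MeasurableSpace.comap Y₁ inferInstance]) ω
            + Real.sqrt α • ((ℙ : Measure Ω)[X₂ |
              MeasurableSpace.comap Y₂ inferInstance]) ω)
        | MeasurableSpace.comap
            (fun ω => Real.sqrt (1 - α) • Y₁ ω + Real.sqrt α • Y₂ ω) inferInstance]
      =ᵐ[(ℙ : Measure Ω)]
      (fun ω => Real.sqrt (1 - α) • ((ℙ : Measure Ω)[X₁ |
            MeasurableSpace.comap Y₁ inferInstance]) ω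
          + Real.sqrt α • ((ℙ : Measure Ω)[X₂ |
            MeasurableSpace.comap Y₂ inferInstance]) ω)) := by
  obtain ⟨hα0, hα1⟩ := hα
  set μ : Measure Ω := ℙ
  -- measurability of Y's
  have hY₁meas : Measurable Y₁ := by
    rw [hY₁]; exact (hX₁meas.const_smul (Real.sqrt γ)).add hZ₁meas
  have hY₂meas : Measurable Y₂ := by
    rw [hY₂]; exact (hX₂meas.const_smul (Real.sqrt γ)).add hZ₂meas
  -- σ-algebras
  set m₁ : MeasurableSpace Ω := MeasurableSpace.comap Y₁ inferInstance with hm₁def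
  set m₂ : MeasurableSpace Ω := MeasurableSpace.comap Y₂ inferInstance with hm₂def
  set mS : MeasurableSpace Ω := MeasurableSpace.comap
    (fun ω => Real.sqrt (1 - α) • Y₁ ω + Real.sqrt α • Y₂ ω) inferInstance with hmSdef
  set mp : MeasurableSpace Ω :=
    MeasurableSpace.comap (fun ω => (Y₁ ω, Y₂ ω)) inferInstance with hmpdef
  set mb : MeasurableSpace Ω :=
    MeasurableSpace.comap X₁ inferInstance ⊔ MeasurableSpace.comap Z₁ inferInstance with hmbdef
  set mc : MeasurableSpace Ω :=
    MeasurableSpace.comap X₂ inferInstance ⊔ MeasurableSpace.comap Z₂ inferInstance with hmcdef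
  letI m0 : MeasurableSpace Ω := ‹MeasureSpace Ω›.toMeasurableSpace
  have hm₁ : m₁ ≤ (inferInstance : MeasurableSpace Ω) := hY₁meas.comap_le
  have hm₂ : m₂ ≤ (inferInstance : MeasurableSpace Ω) := hY₂meas.comap_le
  have hmp_eq : mp = m₁ ⊔ m₂ := comap_prod_eq' Y₁ Y₂
  have hmp : mp ≤ (inferInstance : MeasurableSpace Ω) := by
    rw [hmp_eq]; exact sup_le hm₁ hm₂
  -- mS ≤ mp
  have hmS_le : mS ≤ mp := by
    have hL : Measurable (fun p : EuclideanSpace ℝ (Fin n) × EuclideanSpace ℝ (Fin n) =>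
        Real.sqrt (1 - α) • p.1 + Real.sqrt α • p.2) :=
      (measurable_fst.const_smul (Real.sqrt (1 - α))).add (measurable_snd.const_smul (Real.sqrt α))
    calc mS = MeasurableSpace.comap (fun ω => (Y₁ ω, Y₂ ω))
          (MeasurableSpace.comap (fun p : EuclideanSpace ℝ (Fin n) × EuclideanSpace ℝ (Fin n) =>
            Real.sqrt (1 - α) • p.1 + Real.sqrt α • p.2) inferInstance) := by
          rw [hmSdef, MeasurableSpace.comap_comp]; rfl
      _ ≤ mp := MeasurableSpace.comap_mono hL.comap_le
  have hmS : mS ≤ (inferInstance : MeasurableSpace Ω) := hmS_le.trans hmp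
  -- independence
  have hmeasall : ∀ i, Measurable (![X₁, X₂, Z₁, Z₂] i) := by
    intro i; fin_cases i <;> assumption
  have hIF : IndepFun (fun ω => (X₁ ω, Z₁ ω)) (fun ω => (X₂ ω, Z₂ ω)) μ := by
    have := hindep.indepFun_prodMk_prodMk hmeasall 0 2 1 3
      (by decide) (by decide) (by decide) (by decide)
    simpa using this
  have hIndep_bc : Indep mb mc μ := by
    have := (IndepFun_iff_Indep _ _ _).mp hIF
    rwa [comap_prod_eq' X₁ Z₁, comap_prod_eq' X₂ Z₂] at this
  have hb : mb ≤ (inferInstance : MeasurableSpace Ω) :=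
    sup_le hX₁meas.comap_le hZ₁meas.comap_le
  have hc : mc ≤ (inferInstance : MeasurableSpace Ω) :=
    sup_le hX₂meas.comap_le hZ₂meas.comap_le
  have hX₁mb : Measurable[mb] X₁ :=
    (measurable_iff_comap_le.mpr (le_sup_left : _ ≤ mb)).mono le_rfl le_rfl
  have hZ₁mb : Measurable[mb] Z₁ :=
    (measurable_iff_comap_le.mpr (le_sup_right : _ ≤ mb))
  have hX₂mc : Measurable[mc] X₂ :=
    (measurable_iff_comap_le.mpr (le_sup_left : _ ≤ mc))
  have hZ₂mc : Measurable[mc] Z₂ :=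
    (measurable_iff_comap_le.mpr (le_sup_right : _ ≤ mc))
  have hm₁b : m₁ ≤ mb := by
    have : Measurable[mb] Y₁ := by
      rw [hY₁]; exact (hX₁mb.const_smul (Real.sqrt γ)).add hZ₁mb
    exact this.comap_le
  have hm₂c : m₂ ≤ mc := by
    have : Measurable[mc] Y₂ := by
      rw [hY₂]; exact (hX₂mc.const_smul (Real.sqrt γ)).add hZ₂mc
    exact this.comap_le
  -- integrability
  have hX₁int : Integrable X₁ μ := hX₁L2.integrable one_le_two
  have hX₂int : Integrable X₂ μ := hX₂L2.integrable one_le_two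
  -- conditional expectation decompositions
  have h₁ : μ[X₁ | m₁ ⊔ m₂] =ᵐ[μ] μ[X₁ | m₁] :=
    condexp_sup_indep' hm₁b hb hm₂ (indep_mono' hIndep_bc le_rfl hm₂c) hX₁int
      hX₁mb.stronglyMeasurable
  have h₂ : μ[X₂ | m₁ ⊔ m₂] =ᵐ[μ] μ[X₂ | m₂] := by
    rw [sup_comm m₁ m₂]
    exact condexp_sup_indep' hm₂c hc hm₁ (indep_mono' hIndep_bc.symm le_rfl hm₁b) hX₂int
      hX₂mc.stronglyMeasurable
  -- W := √(1-α) E[X₁|Y₁] + √α E[X₂|Y₂]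
  set W : Ω → EuclideanSpace ℝ (Fin n) := fun ω =>
    Real.sqrt (1 - α) • (μ[X₁ | m₁]) ω + Real.sqrt α • (μ[X₂ | m₂]) ω with hWdef
  -- E[X | mp] =ᵐ W
  have hdecomp : μ[X | mp] =ᵐ[μ] W := by
    rw [hmp_eq]
    have hXeq : X = (Real.sqrt (1 - α) • X₁ + Real.sqrt α • X₂) := by
      rw [hX]; rfl
    calc μ[X | m₁ ⊔ m₂]
        = μ[Real.sqrt (1 - α) • X₁ + Real.sqrt α • X₂ | m₁ ⊔ m₂] := by rw [hXeq]
      _ =ᵐ[μ] μ[Real.sqrt (1 - α) • X₁ | m₁ ⊔ m₂]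
            + μ[Real.sqrt α • X₂ | m₁ ⊔ m₂] :=
          condExp_add (hX₁int.smul _) (hX₂int.smul _) (m₁ ⊔ m₂)
      _ =ᵐ[μ] Real.sqrt (1 - α) • μ[X₁ | m₁ ⊔ m₂] + Real.sqrt α • μ[X₂ | m₁ ⊔ m₂] :=
          (condExp_smul (Real.sqrt (1 - α)) X₁ (m₁ ⊔ m₂)).add (condExp_smul (Real.sqrt α) X₂ (m₁ ⊔ m₂))
      _ =ᵐ[μ] W := by
          filter_upwards [h₁, h₂] with ω hω₁ hω₂
          simp only [Pi.add_apply, Pi.smul_apply, hWdef, hω₁, hω₂]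
  -- tower property
  have htower : μ[X | mS] =ᵐ[μ] μ[W | mS] := by
    have h1 : μ[μ[X | mp] | mS] =ᵐ[μ] μ[X | mS] := condExp_condExp_of_le hmS_le hmp
    exact h1.symm.trans (condExp_congr_ae hdecomp)
  constructor
  · intro h
    have : μ[W | mS] =ᵐ[μ] W := htower.symm.trans (h.trans hdecomp)
    exact this
  · intro h
    exact htower.trans (h.trans hdecomp.symm)
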